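/- Let α ∈ (0, 1/2). Then ∫_0^∞ (1 ∧ (α·(s+1)^{α−1}·|x|)²) ds ≥ c · |αx|^{1/(1−α)}/(1−2α) for all x with |αx| > 1, for some absolute constant c > 0. In particular, finiteness of ∫_0^∞ (1 ∧ ((s+1)^{α−1}αx)²) ds·(over x, ρ) forces ∫_{|αx|>1} |αx|^{1/(1−α)}/(1−2α) ρ(dx) < ∞ whenever ∫_0^∞∫_ℝ (1 ∧ (α(s+1)^{α−1}x)²) ρ(dx) ds < ∞. -/

import Mathlib

open MeasureTheory Set

theorem key (α x : ℝ) (hα0 : 0 < α) (hα2 : α < 1/2) (hax : 1 < |α * x|) :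
    ENNReal.ofReal (|α * x| ^ (1 / (1 - α)) / (1 - 2 * α))
      ≤ ∫⁻ s in Set.Ioi (0 : ℝ),
          ENNReal.ofReal (min 1 ((α * (s + 1) ^ (α - 1) * |x|) ^ 2)) := by
  set A := |α * x| with hA
  have hA1 : 1 < A := hax
  have h1α : 0 < 1 - α := by linarith
  have h12 : 0 < 1 - 2 * α := by linarith
  set T := A ^ (1 / (1 - α)) with hT
  have hT1 : 1 < T :=
    Real.one_lt_rpow_iff_of_pos (by linarith) |>.2 (Or.inl ⟨hA1, by positivity⟩)
  have hT0 : 0 < T := by linarith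
  have hAeq : A = α * |x| := by rw [hA, abs_mul, abs_of_pos hα0]
  have hTA : T ^ (α - 1) * A = 1 := by
    have hm : (1 / (1 - α)) * (α - 1) = -1 := by field_simp; ring
    rw [hT, ← Real.rpow_mul (by positivity : (0:ℝ) ≤ A), hm, Real.rpow_neg_one]
    field_simp
  have hsub : Ioi (T - 1) ⊆ Ioi (0:ℝ) := fun s hs => lt_trans (by linarith : (0:ℝ) < T - 1) hs
  refine le_trans ?_ (lintegral_mono_set hsub)
  have hptwise : ∀ s ∈ Ioi (T - 1),
      ENNReal.ofReal (min 1 ((α * (s + 1) ^ (α - 1) * |x|) ^ 2))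
        = ENNReal.ofReal (A ^ 2 * (s + 1) ^ (2 * α - 2)) := by
    intro s hs
    have hs1 : T ≤ s + 1 := by simpa using by linarith [mem_Ioi.1 hs]
    have hs0 : (0:ℝ) < s + 1 := lt_of_lt_of_le hT0 hs1
    have hle : α * (s + 1) ^ (α - 1) * |x| ≤ 1 := by
      calc α * (s + 1) ^ (α - 1) * |x| = (s + 1) ^ (α - 1) * A := by rw [hAeq]; ring
        _ ≤ T ^ (α - 1) * A := by
            apply mul_le_mul_of_nonneg_right
              (Real.rpow_le_rpow_of_nonpos hT0 hs1 (by linarith)) (by positivity)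
        _ = 1 := hTA
    have hnn : 0 ≤ α * (s + 1) ^ (α - 1) * |x| := by positivity
    have hsq : (α * (s + 1) ^ (α - 1) * |x|) ^ 2 ≤ 1 := by
      calc (α * (s + 1) ^ (α - 1) * |x|) ^ 2 ≤ 1 ^ 2 := pow_le_pow_left₀ hnn hle 2
        _ = 1 := one_pow 2
    rw [min_eq_right hsq]
    congr 1
    have h2 : ((s + 1) ^ (α - 1)) ^ 2 = (s + 1) ^ (2 * α - 2) := by
      rw [← Real.rpow_natCast ((s+1) ^ (α-1)) 2, ← Real.rpow_mul (le_of_lt hs0)]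
      norm_num; ring_nf
    rw [mul_pow, mul_pow, hAeq, mul_pow, h2]; ring
  rw [setLIntegral_congr_fun measurableSet_Ioi hptwise]
  have hshift :
      (∫⁻ s in Ioi (T - 1), ENNReal.ofReal (A ^ 2 * (s + 1) ^ (2 * α - 2)))
        = ∫⁻ t in Ioi T, ENNReal.ofReal (A ^ 2 * t ^ (2 * α - 2)) := by
    have hmp : MeasurePreserving (fun s : ℝ => s + 1) volume volume :=
      measurePreserving_add_right volume 1
    have h := hmp.setLIntegral_comp_preimage_emb
      (MeasurableEquiv.addRight (1:ℝ)).measurableEmbedding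
      (fun t => ENNReal.ofReal (A ^ 2 * t ^ (2 * α - 2))) (Ioi T)
    rw [← h]
    congr 1
    ext s
    simp [mem_preimage, mem_Ioi, lt_sub_iff_add_lt]
  rw [hshift]
  have hp : 2 * α - 2 < -1 := by linarith
  have hint : IntegrableOn (fun t : ℝ => t ^ (2 * α - 2)) (Ioi T) volume :=
    integrableOn_Ioi_rpow_of_lt hp hT0
  have hval : ∫ t in Ioi T, A ^ 2 * t ^ (2 * α - 2)
      = A ^ 2 * (T ^ (2 * α - 1) / (1 - 2 * α)) := by
    rw [integral_const_mul, integral_Ioi_rpow_of_lt hp hT0,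
      show (2 * α - 2 + 1) = 2 * α - 1 by ring]
    congr 1
    rw [div_eq_div_iff (by linarith : (2*α-1:ℝ) ≠ 0) (by linarith : (1-2*α:ℝ) ≠ 0)]
    ring
  have hconv : (∫⁻ t in Ioi T, ENNReal.ofReal (A ^ 2 * t ^ (2 * α - 2)))
      = ENNReal.ofReal (A ^ 2 * (T ^ (2 * α - 1) / (1 - 2 * α))) := by
    rw [← hval, ← ofReal_integral_eq_lintegral_ofReal (hint.const_mul _)]
    filter_upwards [ae_restrict_mem measurableSet_Ioi] with t ht
    have ht0 : (0:ℝ) < t := lt_trans hT0 ht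
    positivity
  rw [hconv]
  apply ENNReal.ofReal_le_ofReal
  have hkey : A ^ 2 * T ^ (2 * α - 1) = T := by
    have hA2 : A ^ 2 = T ^ (2 * (1 - α)) := by
      rw [hT, ← Real.rpow_mul (by positivity : (0:ℝ) ≤ A),
        show (1 / (1 - α)) * (2 * (1 - α)) = 2 by field_simp]
      norm_num [Real.rpow_natCast]
    rw [hA2, ← Real.rpow_add hT0,
      show 2 * (1 - α) + (2 * α - 1) = 1 by ring, Real.rpow_one]
  rw [← mul_div_assoc, hkey]



/-- Inequality (4.7)/(4.8): for `α ∈ (0,1/2)` and `|αx| > 1`,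
`∫_0^∞ (1 ∧ (α(s+1)^{α−1}|x|)²) ds ≥ c |αx|^{1/(1−α)}/(1−2α)` for an absolute
constant `c > 0`; in particular finiteness of the double integral forces
`∫_{|αx|>1} |αx|^{1/(1−α)}/(1−2α) ρ(dx) < ∞`. -/
theorem stmt19 :
    ∃ c : ℝ, 0 < c ∧ ∀ α : ℝ, α ∈ Set.Ioo (0 : ℝ) (1 / 2) →
      (∀ x : ℝ, 1 < |α * x| →
        ENNReal.ofReal (c * |α * x| ^ (1 / (1 - α)) / (1 - 2 * α))
          ≤ ∫⁻ s in Set.Ioi (0 : ℝ),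
              ENNReal.ofReal (min 1 ((α * (s + 1) ^ (α - 1) * |x|) ^ 2))) ∧
      ∀ ρ : Measure ℝ,
        (∫⁻ s in Set.Ioi (0 : ℝ),
            ∫⁻ x, ENNReal.ofReal (min 1 ((α * (s + 1) ^ (α - 1) * x) ^ 2)) ∂ρ) < ⊤ →
        (∫⁻ x in {x : ℝ | 1 < |α * x|},
            ENNReal.ofReal (|α * x| ^ (1 / (1 - α)) / (1 - 2 * α)) ∂ρ) < ⊤ := by
  refine ⟨1, one_pos, fun α hα => ⟨fun x hx => by
    simpa [one_mul] using key α x hα.1 hα.2 hx, fun ρ hρ => ?_⟩⟩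
  obtain ⟨hα0, hα2⟩ := hα
  set g : ℝ → ℝ → ENNReal :=
    fun s x => ENNReal.ofReal (min 1 ((α * (s + 1) ^ (α - 1) * x) ^ 2)) with hg
  -- monotonicity of g in s
  have hmono : ∀ x : ℝ, ∀ s t : ℝ, 0 ≤ s → s ≤ t → g t x ≤ g s x := by
    intro x s t hs hst
    apply ENNReal.ofReal_le_ofReal
    apply min_le_min le_rfl
    have hs1 : (0:ℝ) < s + 1 := by linarith
    have hu : (t + 1) ^ (α - 1) ≤ (s + 1) ^ (α - 1) :=
      Real.rpow_le_rpow_of_nonpos hs1 (by linarith) (by linarith)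
    have hun : (0:ℝ) ≤ (t + 1) ^ (α - 1) := Real.rpow_nonneg (by linarith) _
    calc (α * (t + 1) ^ (α - 1) * x) ^ 2
        = α ^ 2 * x ^ 2 * ((t + 1) ^ (α - 1)) ^ 2 := by ring
      _ ≤ α ^ 2 * x ^ 2 * ((s + 1) ^ (α - 1)) ^ 2 := by
          apply mul_le_mul_of_nonneg_left (pow_le_pow_left₀ hun hu 2) (by positivity)
      _ = (α * (s + 1) ^ (α - 1) * x) ^ 2 := by ring
  -- measurability of g at fixed s
  have hmeasg : ∀ s : ℝ, Measurable fun x => g s x := by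
    intro s
    apply ENNReal.measurable_ofReal.comp
    apply Measurable.min measurable_const
    exact (measurable_id.const_mul _).pow_const 2
  -- interval decomposition
  have hUnion : Ioi (0:ℝ) = ⋃ n : ℕ, Ioc (n:ℝ) (n + 1) := by
    ext s
    simp only [mem_Ioi, mem_iUnion, mem_Ioc]
    constructor
    · intro hs
      refine ⟨⌈s⌉₊ - 1, ?_, ?_⟩
      · have h1 : 1 ≤ ⌈s⌉₊ := Nat.one_le_ceil_iff.2 hs
        have h2 : (⌈s⌉₊ : ℝ) < s + 1 := Nat.ceil_lt_add_one hs.le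
        push_cast [h1]
        linarith
      · have h1 : 1 ≤ ⌈s⌉₊ := Nat.one_le_ceil_iff.2 hs
        have h2 : s ≤ (⌈s⌉₊ : ℝ) := Nat.le_ceil s
        push_cast [h1]
        linarith
    · rintro ⟨n, hn, -⟩
      exact lt_of_le_of_lt (Nat.cast_nonneg n) hn
  have hdisj : Pairwise (Function.onFun Disjoint fun n : ℕ => Ioc (n:ℝ) (n + 1)) := by
    intro m n hmn
    have key : ∀ a b : ℕ, a < b → Disjoint (Ioc (a:ℝ) (a+1)) (Ioc (b:ℝ) (b+1)) := by
      intro a b hab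
      rw [Set.Ioc_disjoint_Ioc]
      calc min ((a:ℝ)+1) ((b:ℝ)+1) ≤ (a:ℝ)+1 := min_le_left _ _
        _ ≤ (b:ℝ) := by exact_mod_cast Nat.add_one_le_iff.2 hab
        _ ≤ max (a:ℝ) (b:ℝ) := le_max_right _ _
    rcases hmn.lt_or_gt with h | h
    · exact key m n h
    · exact (key n m h).symm
  have hsplit : ∀ F : ℝ → ENNReal,
      (∫⁻ s in Ioi (0:ℝ), F s) = ∑' n : ℕ, ∫⁻ s in Ioc (n:ℝ) (n + 1), F s := by
    intro F
    rw [hUnion, lintegral_iUnion (fun n => measurableSet_Ioc) hdisj]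
  -- pointwise: for x with 1 < |αx|, h(x) ≤ 5 * Σ g(n+1, x)
  have hpt : ∀ x ∈ {x : ℝ | 1 < |α * x|},
      ENNReal.ofReal (|α * x| ^ (1 / (1 - α)) / (1 - 2 * α))
        ≤ 5 * ∑' n : ℕ, g ((n:ℝ) + 1) x := by
    intro x hx
    have hx' : 1 < |α * x| := hx
    have h := key α x hα0 hα2 hx'
    have heq : (∫⁻ s in Ioi (0:ℝ),
        ENNReal.ofReal (min 1 ((α * (s + 1) ^ (α - 1) * |x|) ^ 2)))
        = ∫⁻ s in Ioi (0:ℝ), g s x := by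
      apply lintegral_congr
      intro s
      rw [hg]
      congr 2
      simp [mul_pow, sq_abs]
    rw [heq] at h
    refine h.trans ?_
    -- ∫ over Ioi 0 ≤ Σ_n g(n, x) ≤ 5 Σ_n g(n+1, x)
    have hbound : ∀ n : ℕ, (∫⁻ s in Ioc (n:ℝ) (n + 1), g s x) ≤ g (n:ℝ) x := by
      intro n
      calc (∫⁻ s in Ioc (n:ℝ) (n + 1), g s x)
          ≤ ∫⁻ _ in Ioc (n:ℝ) (n + 1), g (n:ℝ) x :=
            setLIntegral_mono' measurableSet_Ioc
              (fun s hs => hmono x _ s (Nat.cast_nonneg n) hs.1.le)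
        _ = g (n:ℝ) x * volume (Ioc (n:ℝ) (n + 1)) := setLIntegral_const _ _
        _ = g (n:ℝ) x := by
            rw [Real.volume_Ioc]
            simp
    have hsum : (∫⁻ s in Ioi (0:ℝ), g s x) ≤ ∑' n : ℕ, g (n:ℝ) x := by
      rw [hsplit (fun s => g s x)]
      exact ENNReal.tsum_le_tsum hbound
    refine hsum.trans ?_
    -- Σ_{n} g(n,x) = g 0 x + Σ_n g(n+1,x) and g 0 x ≤ 4 g 1 x
    have h01 : g (0:ℝ) x ≤ 4 * g (1:ℝ) x := by
      have hg1 : (1/4 : ℝ) ≤ min 1 ((α * ((1:ℝ) + 1) ^ (α - 1) * x) ^ 2) := by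
        have h2 : (1/2 : ℝ) ≤ ((1:ℝ) + 1) ^ (α - 1) := by
          have : ((1:ℝ) + 1) ^ (α - 1) = 2 ^ (α - 1) := by norm_num
          rw [this]
          calc (1/2 : ℝ) = 2 ^ (-1 : ℝ) := by
                rw [Real.rpow_neg_one]; norm_num
            _ ≤ 2 ^ (α - 1) := by
                apply Real.rpow_le_rpow_of_exponent_le one_le_two
                linarith
        have habs : 1 ≤ |α * x| := hx'.le
        have : (1/2 : ℝ) ≤ |α * ((1:ℝ) + 1) ^ (α - 1) * x| := by
          have hrw : |α * ((1:ℝ) + 1) ^ (α - 1) * x|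
              = ((1:ℝ) + 1) ^ (α - 1) * |α * x| := by
            rw [show α * ((1:ℝ) + 1) ^ (α - 1) * x = ((1:ℝ) + 1) ^ (α - 1) * (α * x) by ring,
              abs_mul, abs_of_nonneg (Real.rpow_nonneg (by norm_num) _)]
          rw [hrw]
          calc (1/2 : ℝ) = (1/2) * 1 := by norm_num
            _ ≤ ((1:ℝ) + 1) ^ (α - 1) * |α * x| :=
              mul_le_mul h2 habs zero_le_one (Real.rpow_nonneg (by norm_num) _)
        apply le_min (by norm_num)
        calc (1/4 : ℝ) = (1/2) ^ 2 := by norm_num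
          _ ≤ |α * ((1:ℝ) + 1) ^ (α - 1) * x| ^ 2 :=
              pow_le_pow_left₀ (by norm_num) this 2
          _ = (α * ((1:ℝ) + 1) ^ (α - 1) * x) ^ 2 := sq_abs _
      have hle1 : g (0:ℝ) x ≤ 1 := by
        rw [hg]
        simp only []
        refine (ENNReal.ofReal_le_ofReal (min_le_left _ _)).trans ?_
        simp
      calc g (0:ℝ) x ≤ 1 := hle1
        _ = 4 * (ENNReal.ofReal (1/4 : ℝ)) := by
            rw [show ((1:ℝ)/4) = (4:ℝ)⁻¹ by norm_num, ENNReal.ofReal_inv_of_pos (by norm_num)]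
            rw [ENNReal.ofReal_ofNat]
            rw [ENNReal.mul_inv_cancel (by norm_num) (by norm_num)]
        _ ≤ 4 * g (1:ℝ) x := by
            gcongr
            rw [hg]
            exact ENNReal.ofReal_le_ofReal (by push_cast; linarith [hg1])
    calc (∑' n : ℕ, g (n:ℝ) x)
        = g ((0:ℕ):ℝ) x + ∑' n : ℕ, g (((n+1:ℕ)):ℝ) x :=
          tsum_eq_zero_add' ENNReal.summable
      _ = g (0:ℝ) x + ∑' n : ℕ, g ((n:ℝ) + 1) x := by norm_num
      _ ≤ 4 * g (1:ℝ) x + ∑' n : ℕ, g ((n:ℝ) + 1) x := add_le_add h01 le_rfl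
      _ ≤ 4 * ∑' n : ℕ, g ((n:ℝ) + 1) x + ∑' n : ℕ, g ((n:ℝ) + 1) x := by
          gcongr
          have := ENNReal.le_tsum (f := fun n : ℕ => g ((n:ℝ) + 1) x) 0
          simpa using this
      _ = 5 * ∑' n : ℕ, g ((n:ℝ) + 1) x := by ring
  -- integrate the pointwise bound
  have hmain : (∫⁻ x in {x : ℝ | 1 < |α * x|},
      ENNReal.ofReal (|α * x| ^ (1 / (1 - α)) / (1 - 2 * α)) ∂ρ)
      ≤ 5 * ∑' n : ℕ, ∫⁻ x, g ((n:ℝ) + 1) x ∂ρ := by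
    have hS : MeasurableSet {x : ℝ | 1 < |α * x|} := by
      have : {x : ℝ | 1 < |α * x|} = (fun x => |α * x|) ⁻¹' Ioi 1 := rfl
      rw [this]
      exact ((continuous_abs.comp (continuous_const.mul continuous_id)).measurable)
        measurableSet_Ioi
    calc (∫⁻ x in {x : ℝ | 1 < |α * x|},
            ENNReal.ofReal (|α * x| ^ (1 / (1 - α)) / (1 - 2 * α)) ∂ρ)
        ≤ ∫⁻ x in {x : ℝ | 1 < |α * x|}, 5 * ∑' n : ℕ, g ((n:ℝ) + 1) x ∂ρ :=
          setLIntegral_mono' hS hpt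
      _ ≤ ∫⁻ x, 5 * ∑' n : ℕ, g ((n:ℝ) + 1) x ∂ρ := setLIntegral_le_lintegral _ _
      _ = 5 * ∫⁻ x, ∑' n : ℕ, g ((n:ℝ) + 1) x ∂ρ := by
          rw [lintegral_const_mul]
          apply Measurable.ennreal_tsum
          intro n
          exact hmeasg _
      _ = 5 * ∑' n : ℕ, ∫⁻ x, g ((n:ℝ) + 1) x ∂ρ := by
          rw [lintegral_tsum (fun n => (hmeasg _).aemeasurable)]
  -- bound the sum by the double integral
  have hback : (∑' n : ℕ, ∫⁻ x, g ((n:ℝ) + 1) x ∂ρ)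
      ≤ ∫⁻ s in Ioi (0:ℝ), ∫⁻ x, g s x ∂ρ := by
    rw [hsplit (fun s => ∫⁻ x, g s x ∂ρ)]
    apply ENNReal.tsum_le_tsum
    intro n
    calc (∫⁻ x, g ((n:ℝ) + 1) x ∂ρ)
        = (∫⁻ x, g ((n:ℝ) + 1) x ∂ρ) * volume (Ioc (n:ℝ) (n + 1)) := by
          rw [Real.volume_Ioc]
          simp
      _ = ∫⁻ _ in Ioc (n:ℝ) (n + 1), (∫⁻ x, g ((n:ℝ) + 1) x ∂ρ) :=
          (setLIntegral_const _ _).symm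
      _ ≤ ∫⁻ s in Ioc (n:ℝ) (n + 1), ∫⁻ x, g s x ∂ρ := by
          apply setLIntegral_mono' measurableSet_Ioc
          intro s hs
          apply lintegral_mono
          intro x
          exact hmono x s ((n:ℝ)+1)
            (le_of_lt (lt_of_le_of_lt (Nat.cast_nonneg n) hs.1)) hs.2
  refine lt_of_le_of_lt (hmain.trans (mul_le_mul_right hback 5)) ?_
  exact ENNReal.mul_lt_top (by norm_num) hρ
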